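/- arXiv:cs/0605109 — 3 statements merged into one kernel-verified Lean document; each statement's English description precedes it below -/
import Mathlib

section
/- The maximal state of knowledge is unchanged by restricting to rules applicable to the initial knowledge: for every set of communication rules R and every initial state of knowledge k_0, f*_R(k_0) = f*_{R(k_0)}(k_0), where R(k_0) = {(p_b, x, p_a, k_a) ∈ R : {x} ∪ {v : (p_a, v) ∈ k_a} ⊆ Knowledge(k_0)}. -/
open scoped Classical

/-- A communication rule `(p_b, v, p_a, k_a)`. -/
abbrev Rule (P V : Type*) := P × V × P × Set (P × V)

/-- The knowledge-update operator
`f_R(k) = k ∪ {(p_a, v) : ∃ p_b k_a, (p_b, v) ∈ k, k_a ⊆ k, (p_b, v, p_a, k_a) ∈ R}`. -/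
def fR {P V : Type*} (R : Set (Rule P V)) (k : Set (P × V)) : Set (P × V) :=
  k ∪ {pv | ∃ pb ka, (pb, pv.2) ∈ k ∧ ka ⊆ k ∧ (pb, pv.2, pv.1, ka) ∈ R}

/-- `Knowledge(k) = {v : (p, v) ∈ k for some p}`. -/
def Knowledge {P V : Type*} (k : Set (P × V)) : Set V := {v | ∃ p, (p, v) ∈ k}

/-- The maximal state of knowledge `f*_R(k₀) = ⋃ₙ f_R^n(k₀)`. -/
def fStar {P V : Type*} (R : Set (Rule P V)) (k0 : Set (P × V)) : Set (P × V) :=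
  ⋃ n, (fR R)^[n] k0

/-- `R(k₀)`: the rules applicable to the initial knowledge. -/
def Rres {P V : Type*} (R : Set (Rule P V)) (k0 : Set (P × V)) : Set (Rule P V) :=
  {r ∈ R | r.2.1 ∈ Knowledge k0 ∧ ∀ v, (r.2.2.1, v) ∈ r.2.2.2 → v ∈ Knowledge k0}

/-- the maximal state is unchanged under rule restriction. -/
theorem fStar_restrict {P V : Type*} (R : Set (Rule P V)) (k0 : Set (P × V)) :
    fStar R k0 = fStar (Rres R k0) k0 := by
  have hK : ∀ (S : Set (Rule P V)) (k : Set (P × V)), Knowledge (fR S k) = Knowledge k := by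
    intro S k
    ext v
    constructor
    · rintro ⟨p, hp⟩
      rcases hp with h | ⟨pb, ka, hpb, -, -⟩
      · exact ⟨p, h⟩
      · exact ⟨pb, hpb⟩
    · rintro ⟨p, hp⟩
      exact ⟨p, Or.inl hp⟩
  have hKiter : ∀ (S : Set (Rule P V)) n, Knowledge ((fR S)^[n] k0) = Knowledge k0 := by
    intro S n
    induction n with
    | zero => rfl
    | succ n ih => rw [Function.iterate_succ_apply', hK, ih]
  have heq : ∀ k : Set (P × V), Knowledge k = Knowledge k0 →
      fR R k = fR (Rres R k0) k := by
    intro k hk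
    ext pv
    constructor
    · rintro (h | ⟨pb, ka, hpb, hka, hr⟩)
      · exact Or.inl h
      · refine Or.inr ⟨pb, ka, hpb, hka, hr, ?_, ?_⟩
        · exact hk ▸ ⟨pb, hpb⟩
        · intro v hv
          exact hk ▸ ⟨pv.1, hka hv⟩
    · rintro (h | ⟨pb, ka, hpb, hka, hr, -⟩)
      · exact Or.inl h
      · exact Or.inr ⟨pb, ka, hpb, hka, hr⟩
  have hiter : ∀ n, (fR R)^[n] k0 = (fR (Rres R k0))^[n] k0 := by
    intro n
    induction n with
    | zero => rfl
    | succ n ih =>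
        rw [Function.iterate_succ_apply', Function.iterate_succ_apply', ← ih,
          heq _ (hKiter R n)]
  unfold fStar
  exact Set.iUnion_congr hiter
end

section
/- Merging adversaries does not lose knowledge in one step: for every set of communication rules R and every state of knowledge k, Merge(f_R(k)) ⊆ f_{Merge(R)}(Merge(k)). -/
open scoped Classical

/-- Merge the adversary set `O` into the designated adversary `o`. -/
noncomputable def mergeP {P : Type*} (O : Set P) (o : P) (p : P) : P :=
  if p ∈ O then o else p

/-- Merge applied to a state of knowledge. -/
noncomputable def mergeK {P V : Type*} (O : Set P) (o : P) (k : Set (P × V)) :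
    Set (P × V) :=
  (fun pv => (mergeP O o pv.1, pv.2)) '' k

/-- Merge applied to a set of rules. -/
noncomputable def mergeR {P V : Type*} (O : Set P) (o : P) (R : Set (Rule P V)) :
    Set (Rule P V) :=
  (fun r => (mergeP O o r.1, r.2.1, mergeP O o r.2.2.1, mergeK O o r.2.2.2)) '' R

/-- merging adversaries does not lose knowledge in one step. -/
theorem merge_fR {P V : Type*} (R : Set (Rule P V)) (k : Set (P × V))
    (O : Set P) (o : P) (ho : o ∈ O) :
    mergeK O o (fR R k) ⊆ fR (mergeR O o R) (mergeK O o k) := by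
  rintro _ ⟨⟨p, v⟩, hpv, rfl⟩
  rcases hpv with h | ⟨pb, ka, hb, hka, hr⟩
  · exact Or.inl ⟨(p, v), h, rfl⟩
  · refine Or.inr ⟨mergeP O o pb, mergeK O o ka, ⟨(pb, v), hb, rfl⟩, ?_, ?_⟩
    · rintro _ ⟨x, hx, rfl⟩; exact ⟨x, hka hx, rfl⟩
    · exact ⟨(pb, v, p, ka), hr, rfl⟩
end

section
/- (Lemma 1, existence and uniqueness of the decomposition) Suppose R contains no self-rules (no rules of the form (p, v, p, k_p)), and suppose (P \ {o}) × V_0 ⊆ k_0 where V_0 = Knowledge(k_0). Then for every n ≥ 0 there exists a unique set X_n ⊆ V such that f_R^n(k_0) = ((P \ {o}) × V_0) ∪ ({o} × X_n). -/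
open scoped Classical

/-- `X → x`: there is an applicable rule `(p, x, o, k_σ) ∈ R(k₀)` with `p ≠ o`
and `X = {v : (o, v) ∈ k_σ}`. -/
def arrow {P V : Type*} (R : Set (Rule P V)) (k0 : Set (P × V)) (o : P)
    (X : Set V) (x : V) : Prop :=
  ∃ p kσ, p ≠ o ∧ (p, x, o, kσ) ∈ Rres R k0 ∧ X = {v | (o, v) ∈ kσ}

/-- The adversary-projection operator `g_{R,k₀}(X) = X ∪ {x : ∃ X_σ ⊆ X, X_σ → x}`. -/
def gR {P V : Type*} (R : Set (Rule P V)) (k0 : Set (P × V)) (o : P)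
    (X : Set V) : Set V :=
  X ∪ {x | ∃ Xσ, Xσ ⊆ X ∧ arrow R k0 o Xσ x}

/-- Lemma 1, existence and uniqueness of the decomposition. -/
theorem decomposition_exists_unique {P V : Type*} (R : Set (Rule P V))
    (k0 : Set (P × V)) (o : P)
    (hself : ∀ (p : P) (v : V) (kp : Set (P × V)), (p, v, p, kp) ∉ R)
    (hhon : (({o}ᶜ : Set P) ×ˢ Knowledge k0) ⊆ k0) :
    ∀ n : ℕ, ∃! Xn : Set V,
      (fR R)^[n] k0 = (({o}ᶜ : Set P) ×ˢ Knowledge k0) ∪ (({o} : Set P) ×ˢ Xn) := by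
  have hK : ∀ n, Knowledge ((fR R)^[n] k0) ⊆ Knowledge k0 := by
    intro n
    induction n with
    | zero => simp
    | succ n ih =>
      rw [Function.iterate_succ_apply']
      rintro v ⟨p, hp⟩
      rcases hp with h | ⟨pb, ka, hpb, -, -⟩
      · exact ih ⟨p, h⟩
      · exact ih ⟨pb, hpb⟩
  have hmono : ∀ n, k0 ⊆ (fR R)^[n] k0 := by
    intro n
    induction n with
    | zero => simp
    | succ n ih =>
      rw [Function.iterate_succ_apply']
      exact ih.trans Set.subset_union_left
  intro n
  refine ⟨{v | (o, v) ∈ (fR R)^[n] k0}, ?_, ?_⟩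
  · ext ⟨p, v⟩
    constructor
    · intro h
      by_cases hp : p = o
      · exact Or.inr ⟨by simp [hp], by simpa [hp] using h⟩
      · exact Or.inl ⟨by simpa using hp, hK n ⟨p, h⟩⟩
    · rintro (h | ⟨hp, hv⟩)
      · exact hmono n (hhon h)
      · simp only [Set.mem_singleton_iff] at hp
        subst hp; exact hv
  · intro Y hY
    ext v
    have h1 : (o, v) ∈ (fR R)^[n] k0 ↔ v ∈ Y := by
      rw [hY]
      simp [Set.mem_prod]
    rw [Set.mem_setOf_eq, h1]
end
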